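/- Let F be a linearly ordered field with integer part I, let α, β ∈ F be distinct irrationals with α, β > 1, and let a, b ∈ I^{≥0} be such that a·α^{−1} + b·β^{−1} = 1. Then N_α ∩ N_β = {0}. -/

import Mathlib

/-- `N_α`: the set `{⌊n·α⌋ : n ∈ I, n ≥ 0}`, where `fl` is the floor function
associated to the integer part `I` of `F`. -/
def Nset {F : Type*} [Field F] [LinearOrder F] [IsStrictOrderedRing F] (I : Subring F) (fl : F → F) (α : F) : Set F :=
  {y | ∃ n, n ∈ I ∧ 0 ≤ n ∧ y = fl (n * α)}

/-- An element of `F` is rational (with respect to `I`) if it lies in the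
fraction field of `I` viewed inside `F`. -/
def IsRat {F : Type*} [Field F] [LinearOrder F] [IsStrictOrderedRing F] (I : Subring F) (α : F) : Prop :=
  ∃ p ∈ I, ∃ q ∈ I, q ≠ 0 ∧ α = p / q

theorem stmt_8 {F : Type*} [Field F] [LinearOrder F] [IsStrictOrderedRing F] (I : Subring F) (fl : F → F)
    (hdisc : ∀ x ∈ I, ¬(0 < x ∧ x < 1))
    (hfl : ∀ x : F, fl x ∈ I ∧ fl x ≤ x ∧ x < fl x + 1)
    (α β : F) (hα1 : 1 < α) (hβ1 : 1 < β)
    (hαirr : ¬ IsRat I α) (hβirr : ¬ IsRat I β) (hne : α ≠ β)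
    (a b : F) (ha : a ∈ I) (hb : b ∈ I) (ha0 : 0 ≤ a) (hb0 : 0 ≤ b)
    (hab : a * α⁻¹ + b * β⁻¹ = 1) :
    Nset I fl α ∩ Nset I fl β = {0} := by
  have hα0 : (0:F) < α := lt_trans zero_lt_one hα1
  have hβ0 : (0:F) < β := lt_trans zero_lt_one hβ1
  have hfl0 : fl 0 = 0 := by
    obtain ⟨h1, h2, h3⟩ := hfl 0
    by_contra h
    exact hdisc (-fl 0) (I.neg_mem h1)
      ⟨by simpa using lt_of_le_of_ne h2 h, by linarith⟩
  have hapos : 0 < a := by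
    rcases ha0.lt_or_eq with h | h
    · exact h
    · exfalso
      apply hβirr
      refine ⟨b, hb, 1, I.one_mem, one_ne_zero, ?_⟩
      rw [← h] at hab
      field_simp at hab ⊢
      have := mul_left_cancel₀ hα0.ne' (by linarith : α * b = α * β)
      linarith
  have hbpos : 0 < b := by
    rcases hb0.lt_or_eq with h | h
    · exact h
    · exfalso
      apply hαirr
      refine ⟨a, ha, 1, I.one_mem, one_ne_zero, ?_⟩
      rw [← h] at hab
      field_simp at hab ⊢
      have := mul_right_cancel₀ hβ0.ne' (by linarith : a * β = α * β)
      linarith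
  ext y
  simp only [Set.mem_inter_iff, Set.mem_singleton_iff]
  constructor
  · rintro ⟨⟨m, hmI, hm0, hy1⟩, ⟨n, hnI, hn0, hy2⟩⟩
    by_contra hy
    -- y = fl (m*α) = fl (n*β), y ≠ 0
    obtain ⟨hk1, hk2, hk3⟩ := hfl (m * α)
    obtain ⟨hl1, hl2, hl3⟩ := hfl (n * β)
    rw [← hy1] at hk1 hk2 hk3
    rw [← hy2] at hl1 hl2 hl3
    -- y ≥ 0 hence y > 0
    have hy0 : 0 ≤ y := by
      by_contra h
      push_neg at h
      have hmα : 0 ≤ m * α := mul_nonneg hm0 hα0.le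
      exact hdisc (-y) (I.neg_mem hk1) ⟨by linarith, by linarith⟩
    have hypos : 0 < y := lt_of_le_of_ne hy0 (Ne.symm hy)
    -- m ≠ 0
    have hm : m ≠ 0 := by
      rintro rfl
      simp [hfl0] at hy1
      exact hy hy1
    have hn : n ≠ 0 := by
      rintro rfl
      simp [hfl0] at hy2
      exact hy hy2
    -- strict: y < m*α
    have hkα : y < m * α := by
      refine lt_of_le_of_ne hk2 fun h => ?_
      exact hαirr ⟨y, hk1, m, hmI, hm, by rw [h]; field_simp [mul_comm]⟩
    have hlβ : y < n * β := by
      refine lt_of_le_of_ne hl2 fun h => ?_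
      exact hβirr ⟨y, hl1, n, hnI, hn, by rw [h]; field_simp [mul_comm]⟩
    -- translate to inverses
    have hu : α * α⁻¹ = 1 := mul_inv_cancel₀ hα0.ne'
    have hv : β * β⁻¹ = 1 := mul_inv_cancel₀ hβ0.ne'
    have hu0 : 0 < α⁻¹ := inv_pos.mpr hα0
    have hv0 : 0 < β⁻¹ := inv_pos.mpr hβ0
    have h1 : y * α⁻¹ < m := by
      have := mul_lt_mul_of_pos_right hkα hu0
      calc y * α⁻¹ < m * α * α⁻¹ := this
        _ = m := by rw [mul_assoc, hu, mul_one]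
    have h2 : m < (y + 1) * α⁻¹ := by
      have := mul_lt_mul_of_pos_right hk3 hu0
      calc m = m * α * α⁻¹ := by rw [mul_assoc, hu, mul_one]
        _ < (y + 1) * α⁻¹ := this
    have h3 : y * β⁻¹ < n := by
      have := mul_lt_mul_of_pos_right hlβ hv0
      calc y * β⁻¹ < n * β * β⁻¹ := this
        _ = n := by rw [mul_assoc, hv, mul_one]
    have h4 : n < (y + 1) * β⁻¹ := by
      have := mul_lt_mul_of_pos_right hl3 hv0
      calc n = n * β * β⁻¹ := by rw [mul_assoc, hv, mul_one]
        _ < (y + 1) * β⁻¹ := this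
    have e1 : a * (y * α⁻¹) + b * (y * β⁻¹) = y := by linear_combination y * hab
    have e2 : a * ((y + 1) * α⁻¹) + b * ((y + 1) * β⁻¹) = y + 1 := by
      linear_combination (y + 1) * hab
    have hlow : y < a * m + b * n := by
      have c1 := mul_lt_mul_of_pos_left h1 hapos
      have c2 := mul_lt_mul_of_pos_left h3 hbpos
      linarith
    have hhigh : a * m + b * n < y + 1 := by
      have c1 := mul_lt_mul_of_pos_left h2 hapos
      have c2 := mul_lt_mul_of_pos_left h4 hbpos
      linarith
    exact hdisc (a * m + b * n - y)
      (I.sub_mem (I.add_mem (I.mul_mem ha hmI) (I.mul_mem hb hnI)) hk1)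
      ⟨by linarith, by linarith⟩
  · rintro rfl
    refine ⟨⟨0, I.zero_mem, le_refl _, ?_⟩, ⟨0, I.zero_mem, le_refl _, ?_⟩⟩ <;>
      simp [hfl0]
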